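/- If a topologically mixing homeomorphism of a compact metric space has the L-shadowing property, then it has the two-sided limit shadowing property. -/
import Mathlib


open Filter Metric Set Topology

variable {X : Type*} [MetricSpace X]

/-- `f^k x` for `k : ℤ`, where `f` is a homeomorphism. -/
def iterZ (f : X ≃ₜ X) (k : ℤ) (x : X) : X :=
  if 0 ≤ k then (⇑f)^[k.toNat] x else (⇑f.symm)^[(-k).toNat] x

/-- The classical shadowing property. -/
def Shadowing (f : X ≃ₜ X) : Prop :=
  ∀ ε > (0:ℝ), ∃ δ > (0:ℝ), ∀ x : ℤ → X,
    (∀ k : ℤ, dist (f (x k)) (x (k+1)) < δ) →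
    ∃ z : X, ∀ k : ℤ, dist (iterZ f k z) (x k) < ε

/-- The L-shadowing property. -/
def LShadowing (f : X ≃ₜ X) : Prop :=
  ∀ ε > (0:ℝ), ∃ δ > (0:ℝ), ∀ x : ℤ → X,
    (∀ k : ℤ, dist (f (x k)) (x (k+1)) ≤ δ) →
    Tendsto (fun k : ℤ => dist (f (x k)) (x (k+1))) cofinite (nhds 0) →
    ∃ z : X, (∀ k : ℤ, dist (iterZ f k z) (x k) ≤ ε) ∧
      Tendsto (fun k : ℤ => dist (iterZ f k z) (x k)) cofinite (nhds 0)

/-- The stable set of `x`. -/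
def stableSet (f : X ≃ₜ X) (x : X) : Set X :=
  {y | Tendsto (fun n : ℕ => dist ((⇑f)^[n] x) ((⇑f)^[n] y)) atTop (nhds 0)}

/-- The unstable set of `x`. -/
def unstableSet (f : X ≃ₜ X) (x : X) : Set X := stableSet f.symm x

/-- The local stable set of size `ε` of `x`. -/
def localStable (f : X ≃ₜ X) (ε : ℝ) (x : X) : Set X :=
  {y | ∀ n : ℕ, dist ((⇑f)^[n] x) ((⇑f)^[n] y) ≤ ε}

/-- The local unstable set of size `ε` of `x`. -/
def localUnstable (f : X ≃ₜ X) (ε : ℝ) (x : X) : Set X := localStable f.symm ε x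

/-- `V^s_ε(x) = W^s(x) ∩ W^s_ε(x)`. -/
def Vs (f : X ≃ₜ X) (ε : ℝ) (x : X) : Set X := stableSet f x ∩ localStable f ε x

/-- `V^u_ε(x) = W^u(x) ∩ W^u_ε(x)`. -/
def Vu (f : X ≃ₜ X) (ε : ℝ) (x : X) : Set X := unstableSet f x ∩ localUnstable f ε x

/-- The limit shadowing property. -/
def LimitShadowing (f : X ≃ₜ X) : Prop :=
  ∀ x : ℕ → X, Tendsto (fun k : ℕ => dist (f (x k)) (x (k+1))) atTop (nhds 0) →
    ∃ y : X, Tendsto (fun k : ℕ => dist ((⇑f)^[k] y) (x k)) atTop (nhds 0)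

/-- The two-sided limit shadowing property. -/
def TwoSidedLimitShadowing (f : X ≃ₜ X) : Prop :=
  ∀ x : ℤ → X, Tendsto (fun k : ℤ => dist (f (x k)) (x (k+1))) cofinite (nhds 0) →
    ∃ y : X, Tendsto (fun k : ℤ => dist (iterZ f k y) (x k)) cofinite (nhds 0)

/-- A non-wandering point. -/
def NonWandering (f : X ≃ₜ X) (x : X) : Prop :=
  ∀ U : Set X, IsOpen U → x ∈ U → ∃ k : ℕ, 0 < k ∧ ((⇑f)^[k] '' U ∩ U).Nonempty

/-- The non-wandering set. -/
def omegaSet (f : X ≃ₜ X) : Set X := {x | NonWandering f x}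

/-- Topologically mixing. -/
def TopMixing (f : X ≃ₜ X) : Prop :=
  ∀ U V : Set X, IsOpen U → IsOpen V → U.Nonempty → V.Nonempty →
    ∃ n : ℕ, 0 < n ∧ ∀ k ≥ n, ((⇑f)^[k] '' U ∩ V).Nonempty

/-- `f` is expansive on the set `A` (as a subsystem). -/
def ExpansiveOn (f : X ≃ₜ X) (A : Set X) : Prop :=
  ∃ c > (0:ℝ), ∀ x ∈ A, ∀ y ∈ A,
    (∀ k : ℤ, dist (iterZ f k x) (iterZ f k y) ≤ c) → x = y

/-- The dynamical ball `Γ_δ(x)`. -/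
def dynBall (f : X ≃ₜ X) (δ : ℝ) (x : X) : Set X :=
  {y | ∀ k : ℤ, dist (iterZ f k x) (iterZ f k y) ≤ δ}

/-- There is a periodic `ε`-pseudo-orbit containing both `x` and `y`. -/
def ChainRel (f : X ≃ₜ X) (ε : ℝ) (x y : X) : Prop :=
  ∃ (n : ℕ) (z : ℕ → X), 0 < n ∧ z 0 = x ∧ z n = x ∧ (∃ i ≤ n, z i = y) ∧
    ∀ i < n, dist (f (z i)) (z (i+1)) < ε

/-- The chain recurrent class of `x`. -/
def chainClass (f : X ≃ₜ X) (x : X) : Set X := {y | ∀ ε > (0:ℝ), ChainRel f ε x y}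

/-- `h` is a semiconjugacy from `g` on `K` to the full shift on two symbols. -/
def SemiConjShift (g : X → X) (K : Set X) (h : X → (ℤ → Bool)) : Prop :=
  ContinuousOn h K ∧ (∀ s : ℤ → Bool, ∃ p ∈ K, h p = s) ∧
    ∀ p ∈ K, h (g p) = fun i => h p (i + 1)

/-- `f` admits arbitrarily small topological semi-horseshoes inside `C`. -/
def SmallHorseshoes (f : X ≃ₜ X) (C : Set X) : Prop :=
  ∀ ε > (0:ℝ), ∃ N : ℕ, 1 ≤ N ∧ ∃ K : Set X, K ⊆ C ∧ IsCompact K ∧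
    (⇑f)^[N] '' K = K ∧ (∀ k : ℤ, Metric.diam (iterZ f k '' K) ≤ ε) ∧
    ∃ h : X → (ℤ → Bool), SemiConjShift ((⇑f)^[N]) K h

/-- Uniform mixing: on a compact space, a mixing homeomorphism connects any two
`δ`-balls within a uniform time. -/
lemma unif_mix [CompactSpace X] (f : X ≃ₜ X) (hmix : TopMixing f) {δ : ℝ} (hδ : 0 < δ) :
    ∃ n : ℕ, ∀ k ≥ n, ∀ p q : X, ∃ z : X, dist z p < δ ∧ dist ((⇑f)^[k] z) q < δ := by
  have h2 : (0:ℝ) < δ / 2 := by linarith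
  obtain ⟨t, ht⟩ := isCompact_univ.elim_finite_subcover (fun c : X => ball c (δ/2))
    (fun c => isOpen_ball) (fun x _ => Set.mem_iUnion.mpr ⟨x, mem_ball_self h2⟩)
  have hmix' : ∀ c c' : X, ∃ m : ℕ, ∀ k ≥ m,
      (((⇑f)^[k] '' ball c (δ/2)) ∩ ball c' (δ/2)).Nonempty := by
    intro c c'
    obtain ⟨m, _, hm⟩ := hmix (ball c (δ/2)) (ball c' (δ/2)) isOpen_ball isOpen_ball
      ⟨c, mem_ball_self h2⟩ ⟨c', mem_ball_self h2⟩
    exact ⟨m, hm⟩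
  choose g hgspec using hmix'
  refine ⟨(t ×ˢ t).sup (fun cc => g cc.1 cc.2), fun k hk p q => ?_⟩
  obtain ⟨c, hct, hpc⟩ := Set.mem_iUnion₂.mp (ht (Set.mem_univ p))
  obtain ⟨c', hct', hqc⟩ := Set.mem_iUnion₂.mp (ht (Set.mem_univ q))
  have hle : g c c' ≤ (t ×ˢ t).sup (fun cc => g cc.1 cc.2) :=
    Finset.le_sup (f := fun cc => g cc.1 cc.2) (b := (c, c'))
      (Finset.mem_product.mpr ⟨hct, hct'⟩)
  obtain ⟨w, ⟨z, hz, hfz⟩, hw⟩ := hgspec c c' k (le_trans hle hk)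
  refine ⟨z, ?_, ?_⟩
  · have h1 : dist z c < δ/2 := hz
    have h2' : dist p c < δ/2 := hpc
    calc dist z p ≤ dist z c + dist c p := dist_triangle _ _ _
      _ < δ := by rw [dist_comm c p]; linarith
  · rw [hfz]
    have h1 : dist w c' < δ/2 := hw
    have h2' : dist q c' < δ/2 := hqc
    calc dist w q ≤ dist w c' + dist c' q := dist_triangle _ _ _
      _ < δ := by rw [dist_comm c' q]; linarith

/-- mixing plus L-shadowing implies two-sided limit shadowing. -/
theorem twoSided_of_mixing_lshadowing [CompactSpace X] (f : X ≃ₜ X)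
    (hmix : TopMixing f) (hL : LShadowing f) : TwoSidedLimitShadowing f := by
  intro x hx
  obtain ⟨δ₀, hδ₀, hLs⟩ := hL 1 one_pos
  obtain ⟨δ₁, hδ₁, hucont⟩ := Metric.uniformContinuous_iff.mp
    (CompactSpace.uniformContinuous_of_continuous f.continuous) (δ₀/2) (by linarith)
  set δ : ℝ := min δ₁ (δ₀/2) with hδdef
  have hδ : 0 < δ := lt_min hδ₁ (by linarith)
  have hδa : δ ≤ δ₁ := min_le_left _ _
  have hδb : δ ≤ δ₀/2 := min_le_right _ _
  -- the bad set of indices is finite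
  have hfin : {k : ℤ | ¬ dist (f (x k)) (x (k+1)) < δ}.Finite :=
    Filter.eventually_cofinite.mp (hx.eventually (gt_mem_nhds hδ))
  obtain ⟨M, hM⟩ := (hfin.image Int.natAbs).bddAbove
  have hMs : ∀ k : ℤ, M < k.natAbs → dist (f (x k)) (x (k+1)) < δ := by
    intro k hk
    by_contra hc
    exact absurd (hM (Set.mem_image_of_mem Int.natAbs hc)) (not_le.mpr hk)
  obtain ⟨nmix, hnmix⟩ := unif_mix f hmix hδ
  set N : ℕ := max (M + 1) nmix with hNdef
  have hNM : M < N := lt_of_lt_of_le (Nat.lt_succ_self M) (le_max_left _ _)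
  have hNn : nmix ≤ 2 * N := by
    have h1 : nmix ≤ N := le_max_right _ _
    omega
  obtain ⟨z, hz1, hz2⟩ := hnmix (2 * N) hNn (x (-(N:ℤ))) (x (N:ℤ))
  -- the spliced pseudo-orbit
  set y : ℤ → X := fun k =>
    if -(N:ℤ) ≤ k ∧ k ≤ (N:ℤ) then (⇑f)^[(k + N).toNat] z else x k with hy
  have hyin : ∀ k : ℤ, -(N:ℤ) ≤ k → k ≤ (N:ℤ) → y k = (⇑f)^[(k + N).toNat] z := by
    intro k h1 h2; simp only [hy]; rw [if_pos ⟨h1, h2⟩]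
  have hyout : ∀ k : ℤ, ¬(-(N:ℤ) ≤ k ∧ k ≤ (N:ℤ)) → y k = x k := by
    intro k h; simp only [hy]; rw [if_neg h]
  -- errors of y
  have herr : ∀ k : ℤ, dist (f (y k)) (y (k+1)) ≤ δ₀ := by
    intro k
    rcases lt_trichotomy k (-(N:ℤ) - 1) with hk | hk | hk
    · -- far left: y agrees with x
      rw [hyout k (by omega), hyout (k+1) (by omega)]
      have := hMs k (by omega)
      linarith
    · -- left junction
      subst hk
      rw [hyout _ (by omega), hyin _ (by omega) (by omega)]
      have e1 : (-(N:ℤ) - 1 + 1 + N).toNat = 0 := by omega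
      rw [e1, Function.iterate_zero_apply]
      have h1 : dist (f (x (-(N:ℤ) - 1))) (x (-(N:ℤ) - 1 + 1)) < δ := hMs _ (by omega)
      have e2 : (-(N:ℤ) - 1 + 1) = -(N:ℤ) := by ring
      rw [e2] at h1
      calc dist (f (x (-(N:ℤ) - 1))) z
          ≤ dist (f (x (-(N:ℤ) - 1))) (x (-(N:ℤ))) + dist (x (-(N:ℤ))) z :=
            dist_triangle _ _ _
        _ ≤ δ₀ := by rw [dist_comm (x (-(N:ℤ))) z]; linarith
    · rcases lt_trichotomy k (N:ℤ) with hk2 | hk2 | hk2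
      · -- middle: true orbit
        rw [hyin k (by omega) (by omega), hyin (k+1) (by omega) (by omega)]
        have e1 : (k + 1 + N).toNat = (k + N).toNat + 1 := by omega
        rw [e1, Function.iterate_succ_apply']
        simp [hδ₀.le]
      · -- right junction
        subst hk2
        rw [hyin _ (by omega) (by omega), hyout _ (by omega)]
        have e1 : ((N:ℤ) + N).toNat = 2 * N := by omega
        rw [e1]
        have h1 : dist (f ((⇑f)^[2*N] z)) (f (x (N:ℤ))) < δ₀/2 :=
          hucont (lt_of_lt_of_le hz2 hδa)
        have h2 : dist (f (x (N:ℤ))) (x ((N:ℤ)+1)) < δ := hMs _ (by omega)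
        calc dist (f ((⇑f)^[2*N] z)) (x ((N:ℤ)+1))
            ≤ dist (f ((⇑f)^[2*N] z)) (f (x (N:ℤ))) + dist (f (x (N:ℤ))) (x ((N:ℤ)+1)) :=
              dist_triangle _ _ _
          _ ≤ δ₀ := by linarith
      · -- far right
        rw [hyout k (by omega), hyout (k+1) (by omega)]
        have := hMs k (by omega)
        linarith
  -- errors of y agree with errors of x cofinitely
  have heq : (fun k : ℤ => dist (f (x k)) (x (k+1)))
      =ᶠ[cofinite] (fun k : ℤ => dist (f (y k)) (y (k+1))) := by
    rw [Filter.eventuallyEq_iff_exists_mem]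
    refine ⟨{k : ℤ | k < -(N:ℤ) - 1 ∨ (N:ℤ) < k}, ?_, ?_⟩
    · rw [Filter.mem_cofinite]
      apply Set.Finite.subset (Set.finite_Icc (-(N:ℤ) - 1) (N:ℤ))
      intro k hk
      simp only [Set.mem_compl_iff, Set.mem_setOf_eq, not_or, not_lt] at hk
      exact Set.mem_Icc.mpr ⟨hk.1, hk.2⟩
    · intro k hk
      show dist (f (x k)) (x (k+1)) = dist (f (y k)) (y (k+1))
      rcases hk with hk | hk
      · rw [hyout k (by omega), hyout (k+1) (by omega)]
      · rw [hyout k (by omega), hyout (k+1) (by omega)]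
  have htend : Tendsto (fun k : ℤ => dist (f (y k)) (y (k+1))) cofinite (nhds 0) :=
    hx.congr' heq
  obtain ⟨w, _, hw2⟩ := hLs y herr htend
  refine ⟨w, hw2.congr' ?_⟩
  rw [Filter.eventuallyEq_iff_exists_mem]
  refine ⟨{k : ℤ | ¬(-(N:ℤ) ≤ k ∧ k ≤ (N:ℤ))}, ?_, ?_⟩
  · rw [Filter.mem_cofinite]
    apply Set.Finite.subset (Set.finite_Icc (-(N:ℤ)) (N:ℤ))
    intro k hk
    simp only [Set.mem_compl_iff, Set.mem_setOf_eq, not_not] at hk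
    exact Set.mem_Icc.mpr hk
  · intro k hk
    show dist (iterZ f k w) (y k) = dist (iterZ f k w) (x k)
    rw [hyout k hk]
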